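/- arXiv:2106.08275 — 5 statements merged into one kernel-verified Lean document; each statement's English description precedes it below -/
import Mathlib

section
/- For all positive integers r and n, S(r,n) = \sum_{j=1}^{r} (-1)^{r-j} r \binom{r-1}{j-1} (2^{n+j}-1)/(n+j). -/
open Finset intervalIntegral MeasureTheory

lemma intA (m : ℕ) : ∫ x in (0:ℝ)..1, x^m = 1/(m+1) := by
  rw [integral_pow]; simp

lemma intB (N : ℕ) : ∫ x in (0:ℝ)..1, (1+x)^N = (2^(N+1)-1)/(N+1) := by
  have h := intervalIntegral.integral_comp_add_left (a := (0:ℝ)) (b := 1)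
    (fun x : ℝ => x ^ N) 1
  rw [h, integral_pow]
  norm_num

lemma lhs_int (r n : ℕ) (hr : 0 < r) :
    (∫ x in (0:ℝ)..1, (r:ℝ) * x^(r-1) * (1+x)^n)
      = ∑ k ∈ range (n+1), (r:ℝ)/((k:ℝ)+(r:ℝ)) * (n.choose k) := by
  have h1 : ∀ x : ℝ, (r:ℝ) * x^(r-1) * (1+x)^n
      = ∑ k ∈ range (n+1), (r:ℝ) * (n.choose k) * x^(k+(r-1)) := by
    intro x
    rw [add_comm (1:ℝ) x, add_pow, Finset.mul_sum]
    apply Finset.sum_congr rfl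
    intro k _
    rw [pow_add]
    ring
  rw [intervalIntegral.integral_congr (fun x _ => h1 x)]
  rw [intervalIntegral.integral_finset_sum]
  · apply Finset.sum_congr rfl
    intro k _
    rw [intervalIntegral.integral_const_mul, intA]
    have : ((k+(r-1) : ℕ) : ℝ) + 1 = (k:ℝ) + (r:ℝ) := by
      push_cast [Nat.cast_sub hr]
      ring
    rw [this]
    ring
  · intro k _
    apply Continuous.intervalIntegrable
    continuity

lemma rhs_int (r n : ℕ) (hr : 0 < r) :
    (∫ x in (0:ℝ)..1, (r:ℝ) * x^(r-1) * (1+x)^n)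
      = ∑ i ∈ range r, (-1:ℝ)^(r-1-i) * r * ((r-1).choose i)
          * (2^(n+i+1)-1) / ((n:ℝ)+(i:ℝ)+1) := by
  have h1 : ∀ x : ℝ, (r:ℝ) * x^(r-1) * (1+x)^n
      = ∑ i ∈ range r, (-1:ℝ)^(r-1-i) * r * ((r-1).choose i) * (1+x)^(n+i) := by
    intro x
    have hx : x ^ (r-1) = ((1+x) + (-1)) ^ (r-1) := by ring_nf
    rw [hx, add_pow]
    have hrr : (r-1)+1 = r := Nat.succ_pred_eq_of_pos hr
    rw [hrr, Finset.mul_sum, Finset.sum_mul]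
    apply Finset.sum_congr rfl
    intro i _
    rw [pow_add]
    ring
  rw [intervalIntegral.integral_congr (fun x _ => h1 x)]
  rw [intervalIntegral.integral_finset_sum]
  · apply Finset.sum_congr rfl
    intro i _
    rw [intervalIntegral.integral_const_mul, intB]
    push_cast
    ring
  · intro i _
    apply Continuous.intervalIntegrable
    continuity

/-- `S(r,n) = ∑_{k=0}^n (r/(k+r)) * C(n,k)` as a rational number. -/
def S (r n : ℕ) : ℚ :=
  ∑ k ∈ Finset.range (n + 1), (r : ℚ) / ((k : ℚ) + (r : ℚ)) * (n.choose k)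

theorem S_eq_sum_formula (r n : ℕ) (hr : 0 < r) (hn : 0 < n) :
    S r n = ∑ j ∈ Finset.Icc 1 r,
      (-1 : ℚ) ^ (r - j) * (r : ℚ) * ((r - 1).choose (j - 1) : ℚ) *
        ((2 : ℚ) ^ (n + j) - 1) / ((n : ℚ) + (j : ℚ)) := by
  have key : ((S r n : ℚ) : ℝ)
      = ((∑ j ∈ Finset.Icc 1 r,
      (-1 : ℚ) ^ (r - j) * (r : ℚ) * ((r - 1).choose (j - 1) : ℚ) *
        ((2 : ℚ) ^ (n + j) - 1) / ((n : ℚ) + (j : ℚ)) : ℚ) : ℝ) := by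
    simp only [S]
    push_cast
    rw [show (∑ k ∈ range (n+1), (r:ℝ)/((k:ℝ)+(r:ℝ)) * (n.choose k))
        = _ from (lhs_int r n hr).symm.trans (rhs_int r n hr)]
    rw [← Finset.Ico_add_one_right_eq_Icc, Finset.sum_Ico_eq_sum_range]
    apply Finset.sum_congr rfl
    intro i hi
    rw [show r - (1+i) = r-1-i from by omega, show (1+i)-1 = i from by omega,
        show n + (1+i) = n+i+1 from by omega]
    push_cast
    ring
  exact_mod_cast key
end

section
/- Let r and n be positive integers. If there is a prime p > n that divides one of the integers 1+r, 2+r, \ldots, n+r, then S_r(n) is not an integer. -/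
/-- `S_r(n) = ∑_{k=1}^n (k/(k+r)) * C(n,k)` as a rational number. -/
def Sr (r n : ℕ) : ℚ :=
  ∑ k ∈ Finset.Icc 1 n, (k : ℚ) / ((k : ℚ) + (r : ℚ)) * (n.choose k)

theorem Sr_not_integral_of_large_prime_divisor (r n : ℕ) (hr : 0 < r) (hn : 0 < n)
    (p : ℕ) (hp : p.Prime) (hpn : n < p)
    (hdvd : ∃ k, 1 ≤ k ∧ k ≤ n ∧ p ∣ k + r) :
    ¬ ∃ m : ℤ, Sr r n = m := by
  obtain ⟨k₀, hk₀1, hk₀n, hpk₀⟩ := hdvd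
  haveI : Fact p.Prime := ⟨hp⟩
  rintro ⟨m, hm⟩
  set f : ℕ → ℚ := fun k => (k : ℚ) / ((k : ℚ) + (r : ℚ)) * (n.choose k) with hf
  have hfk : ∀ k, f k = ((k * n.choose k : ℕ) : ℚ) / ((k + r : ℕ) : ℚ) := by
    intro k
    simp only [hf]
    push_cast
    rw [div_mul_eq_mul_div]
  have hnormf : ∀ k, padicNorm p (f k) =
      padicNorm p ((k * n.choose k : ℕ) : ℚ) / padicNorm p ((k + r : ℕ) : ℚ) := by
    intro k; rw [hfk k, padicNorm.div]
  have hpnfact : ¬ p ∣ n.factorial := fun h =>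
    absurd ((Nat.Prime.dvd_factorial hp).1 h) (not_le.2 hpn)
  have hchoose : ∀ k, k ≤ n → ¬ p ∣ n.choose k := by
    intro k hk hdvd
    exact hpnfact (hdvd.trans ⟨k.factorial * (n - k).factorial, by
      rw [← mul_assoc, Nat.choose_mul_factorial_mul_factorial hk]⟩)
  -- the special term has norm > 1
  have hden0 : padicNorm p ((k₀ + r : ℕ) : ℚ) < 1 := (padicNorm.nat_lt_one_iff _).2 hpk₀
  have hdenpos : 0 < padicNorm p ((k₀ + r : ℕ) : ℚ) := by
    have hne : ((k₀ + r : ℕ) : ℚ) ≠ 0 := by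
      exact Nat.cast_pos.2 (by omega : 0 < k₀ + r) |>.ne'
    exact lt_of_le_of_ne (padicNorm.nonneg _) (Ne.symm (padicNorm.nonzero hne))
  have hnum : padicNorm p ((k₀ * n.choose k₀ : ℕ) : ℚ) = 1 := by
    rw [padicNorm.nat_eq_one_iff]
    intro h
    rcases (Nat.Prime.dvd_mul hp).1 h with h | h
    · have := Nat.le_of_dvd (by omega) h; omega
    · exact hchoose k₀ hk₀n h
  have hbig : 1 < padicNorm p (f k₀) := by
    rw [hnormf k₀, hnum]
    rw [lt_div_iff₀ hdenpos, one_mul]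
    exact hden0
  -- all other terms have norm ≤ 1
  have hsmall : ∀ k ∈ (Finset.Icc 1 n).erase k₀, padicNorm p (f k) ≤ 1 := by
    intro k hk
    obtain ⟨hkne, hkIcc⟩ := Finset.mem_erase.1 hk
    rw [Finset.mem_Icc] at hkIcc
    have hden : padicNorm p ((k + r : ℕ) : ℚ) = 1 := by
      rw [padicNorm.nat_eq_one_iff]
      intro hdvd'
      -- p divides both k + r and k₀ + r, so p divides their difference, impossible
      have h1 : k + r < k₀ + r + p := by omega
      have h2 : k₀ + r < k + r + p := by omega
      rcases le_total k k₀ with hle | hle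
      · have : p ∣ (k₀ + r) - (k + r) := Nat.dvd_sub hpk₀ hdvd'
        have := Nat.le_of_dvd (by omega) this
        omega
      · have : p ∣ (k + r) - (k₀ + r) := Nat.dvd_sub hdvd' hpk₀
        have := Nat.le_of_dvd (by omega) this
        omega
    rw [hnormf k, hden, div_one]
    exact padicNorm.of_nat _
  -- split the sum
  have hmem : k₀ ∈ Finset.Icc 1 n := Finset.mem_Icc.2 ⟨hk₀1, hk₀n⟩
  have hsplit : Sr r n = f k₀ + ∑ k ∈ (Finset.Icc 1 n).erase k₀, f k := by
    rw [Sr, ← Finset.add_sum_erase _ f hmem]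
  have hrest : padicNorm p (∑ k ∈ (Finset.Icc 1 n).erase k₀, f k) ≤ 1 := by
    rcases Finset.eq_empty_or_nonempty ((Finset.Icc 1 n).erase k₀) with he | hne
    · rw [he, Finset.sum_empty, padicNorm.zero]; norm_num
    · exact padicNorm.sum_le hne hsmall
  have hne' : padicNorm p (f k₀) ≠
      padicNorm p (∑ k ∈ (Finset.Icc 1 n).erase k₀, f k) :=
    ne_of_gt (lt_of_le_of_lt hrest hbig)
  have hSr : 1 < padicNorm p (Sr r n) := by
    rw [hsplit, padicNorm.add_eq_max_of_ne hne']
    exact lt_max_of_lt_left hbig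
  have : padicNorm p (Sr r n) ≤ 1 := by
    rw [hm]
    exact padicNorm.of_int m
  linarith
end

section
/- For every integer r \ge 2, the number of primes p with r \le p \le r + r^{0.61} and \ell_2(p) \le r^{0.3} is at most r^{0.6} \cdot \log 2 / \log r (i.e., at most r^{0.6} / \log_2 r). -/
theorem count_primes_small_order (r : ℕ) (hr : 2 ≤ r) :
    (Nat.card {p : ℕ | p.Prime ∧ (r : ℝ) ≤ p ∧ (p : ℝ) ≤ (r : ℝ) + (r : ℝ) ^ (0.61 : ℝ) ∧
        (orderOf (2 : ZMod p) : ℝ) ≤ (r : ℝ) ^ (0.3 : ℝ)} : ℝ)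
      ≤ (r : ℝ) ^ (0.6 : ℝ) * Real.log 2 / Real.log r := by
  have hr1 : (1:ℝ) ≤ (r:ℝ) := by exact_mod_cast hr.trans' one_le_two
  have hrR : (2:ℝ) ≤ (r:ℝ) := by exact_mod_cast hr
  have hr0 : (0:ℝ) < (r:ℝ) := by linarith
  have hlogr : 0 < Real.log r := Real.log_pos (by linarith)
  set S := {p : ℕ | p.Prime ∧ (r : ℝ) ≤ p ∧ (p : ℝ) ≤ (r : ℝ) + (r : ℝ) ^ (0.61 : ℝ) ∧
      (orderOf (2 : ZMod p) : ℝ) ≤ (r : ℝ) ^ (0.3 : ℝ)} with hSdef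
  by_cases hr2 : r = 2
  · -- special case r = 2 : the set is {2}
    subst hr2
    have h061 : (2:ℝ) ^ (0.61:ℝ) < 2 := by
      have := Real.rpow_lt_rpow_of_exponent_lt (x := 2) one_lt_two (by norm_num : (0.61:ℝ) < 1)
      simpa using this
    have h03 : (2:ℝ) ^ (0.3:ℝ) < 2 := by
      have := Real.rpow_lt_rpow_of_exponent_lt (x := 2) one_lt_two (by norm_num : (0.3:ℝ) < 1)
      simpa using this
    have hSeq : S = {2} := by
      ext p
      simp only [hSdef, Set.mem_setOf_eq, Set.mem_singleton_iff]
      constructor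
      · rintro ⟨hp, h2p, hple, hord⟩
        have hp2 : 2 ≤ p := by exact_mod_cast h2p
        have hp3 : p ≤ 3 := by
          have : (p:ℝ) < 4 := by linarith
          exact_mod_cast Nat.lt_succ_iff.mp (by exact_mod_cast this)
        interval_cases p
        · rfl
        · exfalso
          have ho3 : orderOf (2 : ZMod 3) = 2 := by
            refine orderOf_eq_prime ?_ ?_ <;> decide
          rw [ho3] at hord
          push_cast at hord
          linarith
      · rintro rfl
        have hnn : (0:ℝ) ≤ (2:ℝ) ^ (0.61:ℝ) := Real.rpow_nonneg (by norm_num) _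
        refine ⟨Nat.prime_two, by norm_num, by push_cast; linarith, ?_⟩
        have h0 : orderOf (2 : ZMod 2) = 0 := by
          have : (2 : ZMod 2) = 0 := by decide
          rw [this, orderOf_eq_zero_iff]
          intro h
          obtain ⟨n, hn, hne⟩ := h.exists_pow_eq_one
          simp [zero_pow hn.ne'] at hne
        rw [h0]
        push_cast
        positivity
    rw [hSeq]
    simp only [Nat.card_unique, Nat.cast_one]
    have h2c : ((2:ℕ):ℝ) = 2 := by norm_num
    rw [h2c, mul_div_assoc, div_self (Real.log_pos one_lt_two).ne', mul_one]
    calc (1:ℝ) = (2:ℝ) ^ (0:ℝ) := by norm_num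
      _ ≤ (2:ℝ) ^ (0.6:ℝ) := Real.rpow_le_rpow_of_exponent_le one_le_two (by norm_num)
      _ = _ := by norm_num
  · -- general case r ≥ 3
    have hr3 : 3 ≤ r := by omega
    set D := ⌊(r:ℝ) ^ (0.3:ℝ)⌋₊ with hD
    set N := ∏ d ∈ Finset.Icc 1 D, (2^d - 1) with hN
    -- finiteness
    have hSsub : S ⊆ Set.Iic (2*r) := by
      intro p hp
      obtain ⟨-, -, hple, -⟩ := hp
      have h61 : (r:ℝ) ^ (0.61:ℝ) ≤ (r:ℝ) := by
        have := Real.rpow_le_rpow_of_exponent_le hr1 (by norm_num : (0.61:ℝ) ≤ 1)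
        simpa using this
      have : (p:ℝ) ≤ 2 * r := by linarith
      exact_mod_cast this
    have hfin : S.Finite := (Set.finite_Iic (2*r)).subset hSsub
    have hcard : Nat.card S = hfin.toFinset.card := by
      rw [Nat.card_coe_set_eq, Set.ncard_eq_toFinset_card _ hfin]
    set t := hfin.toFinset with ht
    -- every p in t divides N
    have hNpos : 0 < N := by
      refine Finset.prod_pos fun d hd => ?_
      have : 1 ≤ d := (Finset.mem_Icc.mp hd).1
      have h2d : 2 ≤ 2^d := by
        calc 2 = 2^1 := (pow_one 2).symm
          _ ≤ 2^d := Nat.pow_le_pow_right (by norm_num) ‹1 ≤ d›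
      omega
    have hdvd : ∀ p ∈ t, p ∣ N := by
      intro p hp
      rw [ht, Set.Finite.mem_toFinset] at hp
      obtain ⟨hprime, hrp, -, hord⟩ := hp
      haveI := Fact.mk hprime
      have hpr : r ≤ p := by exact_mod_cast hrp
      have hp2 : p ≠ 2 := by omega
      have h2ne : (2 : ZMod p) ≠ 0 := by
        have : ((2:ℕ) : ZMod p) ≠ 0 := by
          rw [Ne, ZMod.natCast_eq_zero_iff]
          intro h
          have := Nat.le_of_dvd (by norm_num) h
          omega
        simpa using this
      have hfo : IsOfFinOrder (2 : ZMod p) := by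
        refine isOfFinOrder_iff_pow_eq_one.mpr ⟨p - 1, ?_, ZMod.pow_card_sub_one_eq_one h2ne⟩
        have := hprime.two_le; omega
      set o := orderOf (2 : ZMod p) with ho
      have ho1 : 1 ≤ o := hfo.orderOf_pos
      have hoD : o ≤ D := Nat.le_floor hord
      have hpdvd : p ∣ 2^o - 1 := by
        have hpow : ((2:ZMod p))^o = 1 := pow_orderOf_eq_one _
        have h2 : ((2^o - 1 : ℕ) : ZMod p) = 0 := by
          push_cast [Nat.cast_sub (Nat.one_le_two_pow)]
          simp [hpow]
        exact (ZMod.natCast_eq_zero_iff _ _).mp h2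
      exact hpdvd.trans (Finset.dvd_prod_of_mem _ (Finset.mem_Icc.mpr ⟨ho1, hoD⟩))
    -- key natural number inequality
    have hmain : r ^ t.card ≤ N := by
      calc r ^ t.card = ∏ _p ∈ t, r := (Finset.prod_const r).symm
        _ ≤ ∏ p ∈ t, p := by
            refine Finset.prod_le_prod' fun p hp => ?_
            rw [ht, Set.Finite.mem_toFinset] at hp
            exact_mod_cast hp.2.1
        _ ≤ N := Nat.le_of_dvd hNpos <| Finset.prod_primes_dvd N
            (fun p hp => by
              rw [ht, Set.Finite.mem_toFinset] at hp
              exact hp.1.prime) hdvd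
    have hNle : N ≤ 2 ^ (D * D) := by
      calc N ≤ ∏ d ∈ Finset.Icc 1 D, 2^d := by
            exact Finset.prod_le_prod' fun d _ => Nat.sub_le _ _
        _ = 2 ^ (∑ d ∈ Finset.Icc 1 D, d) := by
            rw [Finset.prod_pow_eq_pow_sum]
        _ ≤ 2 ^ (D * D) := by
            refine Nat.pow_le_pow_right (by norm_num) ?_
            calc ∑ d ∈ Finset.Icc 1 D, d ≤ ∑ _d ∈ Finset.Icc 1 D, D :=
                  Finset.sum_le_sum fun d hd => (Finset.mem_Icc.mp hd).2
              _ = D * D := by simp [Nat.card_Icc, mul_comm]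
    -- pass to reals
    have hDle : (D:ℝ) ≤ (r:ℝ) ^ (0.3:ℝ) := Nat.floor_le (by positivity)
    have hDsq : ((D * D : ℕ) : ℝ) ≤ (r:ℝ) ^ (0.6:ℝ) := by
      push_cast
      calc (D:ℝ) * D ≤ (r:ℝ) ^ (0.3:ℝ) * (r:ℝ) ^ (0.3:ℝ) := by
            have h0 : (0:ℝ) ≤ D := Nat.cast_nonneg _
            exact mul_le_mul hDle hDle h0 (by positivity)
        _ = (r:ℝ) ^ (0.6:ℝ) := by
            rw [← Real.rpow_add hr0]; norm_num
    have key : ((r:ℝ)) ^ t.card ≤ (2:ℝ) ^ ((r:ℝ) ^ (0.6:ℝ)) := by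
      calc ((r:ℝ)) ^ t.card ≤ ((2 ^ (D*D) : ℕ) : ℝ) := by exact_mod_cast hmain.trans hNle
        _ = (2:ℝ) ^ (((D*D : ℕ)):ℝ) := by
            rw [Nat.cast_pow, ← Real.rpow_natCast]
            norm_num
        _ ≤ (2:ℝ) ^ ((r:ℝ) ^ (0.6:ℝ)) := Real.rpow_le_rpow_of_exponent_le one_le_two hDsq
    have hlog : (t.card : ℝ) * Real.log r ≤ (r:ℝ) ^ (0.6:ℝ) * Real.log 2 := by
      have := Real.log_le_log (by positivity) key
      rwa [Real.log_pow, Real.log_rpow (by norm_num)] at this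
    rw [hcard, le_div_iff₀ hlogr]
    exact hlog
end

section
/- Let r and n be positive integers and let p > \max(r, 2) be a prime such that there is exactly one index j_0 \in \{1, \ldots, r\} with p \mid n + j_0. If S(r,n) is an integer, then \ell_2(p) divides n + j_0. -/
open Polynomial
open Polynomial

noncomputable def antideriv (p : ℚ[X]) : ℚ[X] :=
  p.sum fun m c => C (c / (m + 1)) * X ^ (m + 1)

lemma derivative_antideriv (p : ℚ[X]) : derivative (antideriv p) = p := by
  rw [antideriv, Polynomial.sum_def, derivative_sum]
  have : ∀ m ∈ p.support, derivative (C (p.coeff m / (m + 1)) * X ^ (m + 1))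
      = C (p.coeff m) * X ^ m := by
    intro m hm
    rw [derivative_C_mul, derivative_X_pow, Nat.add_sub_cancel, ← mul_assoc, ← C_mul]
    push_cast
    rw [div_mul_cancel₀]
    positivity
  rw [Finset.sum_congr rfl this]
  exact (p.as_sum_support_C_mul_X_pow).symm

noncomputable def I2 (a b : ℚ) (p : ℚ[X]) : ℚ :=
  (antideriv p).eval b - (antideriv p).eval a

lemma I2_derivative (a b : ℚ) (F : ℚ[X]) :
    I2 a b (derivative F) = F.eval b - F.eval a := by
  have h : derivative (antideriv (derivative F) - F) = 0 := by
    rw [derivative_sub, derivative_antideriv, sub_self]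
  have hc : antideriv (derivative F) - F
      = C ((antideriv (derivative F) - F).coeff 0) :=
    Polynomial.eq_C_of_natDegree_eq_zero
      (Polynomial.natDegree_eq_zero_of_derivative_eq_zero h)
  have hb := congrArg (Polynomial.eval b) hc
  have ha := congrArg (Polynomial.eval a) hc
  simp only [eval_sub, eval_C] at hb ha
  rw [I2]; linarith

lemma I2_comp (p : ℚ[X]) : I2 0 1 p = I2 1 2 (p.comp (X - 1)) := by
  have key : derivative ((antideriv p).comp (X - 1)) = p.comp (X - 1) := by
    rw [derivative_comp, derivative_antideriv]
    simp
  have h1 : I2 1 2 (p.comp (X - 1)) = ((antideriv p).comp (X - 1)).eval 2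
      - ((antideriv p).comp (X - 1)).eval 1 := by
    rw [← key, I2_derivative]
  have h0 : I2 0 1 p = (antideriv p).eval 1 - (antideriv p).eval 0 := by
    conv_lhs => rw [← derivative_antideriv p]
    rw [I2_derivative]
  rw [h0, h1]
  simp [eval_comp]
  norm_num

lemma I2_monomial (a b : ℚ) (m : ℕ) (c : ℚ) :
    I2 a b (C c * X ^ m) = c * (b ^ (m + 1) - a ^ (m + 1)) / (m + 1) := by
  rw [I2, antideriv, C_mul_X_pow_eq_monomial, sum_monomial_index c _ (by simp)]
  simp only [eval_mul, eval_C, eval_pow, eval_X]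
  ring

lemma I2_sum {s : Finset ℕ} (a b : ℚ) (f : ℕ → ℚ[X]) :
    I2 a b (∑ i ∈ s, f i) = ∑ i ∈ s, I2 a b (f i) := by
  classical
  induction s using Finset.induction with
  | empty => simp [I2, antideriv]
  | insert _ _ h ih =>
      rw [Finset.sum_insert h, Finset.sum_insert h, ← ih]
      have hadd : ∀ p q : ℚ[X], I2 a b (p + q) = I2 a b p + I2 a b q := by
        intro p q
        have : antideriv (p + q) = antideriv p + antideriv q := by
          rw [antideriv, antideriv, antideriv]
          apply Polynomial.sum_add_index <;> intros <;> simp [add_div, add_mul]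
        rw [I2, this]; simp [I2]; ring
      exact hadd _ _

lemma S_eq (r' n : ℕ) :
    S (r'+1) n = ∑ i ∈ Finset.range (r'+1),
      ((r' : ℚ)+1) * (r'.choose i) * (-1)^(r'-i) * ((2:ℚ)^(n+i+1) - 1)
        / ((n : ℚ) + i + 1) := by
  have hP : (X:ℚ[X])^r' * (X+1)^n
      = ∑ k ∈ Finset.range (n+1), C ((n.choose k : ℚ)) * X ^ (k + r') := by
    rw [add_pow, Finset.mul_sum]
    refine Finset.sum_congr rfl fun k hk => ?_
    simp only [one_pow, mul_one, Polynomial.C_eq_natCast, pow_add]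
    ring
  have hcomp : ((X:ℚ[X])^r' * (X+1)^n).comp (X - 1) = (X - 1)^r' * X^n := by
    simp [mul_comp, pow_comp, add_comp, X_comp, one_comp, sub_add_cancel]
  have hQ : ((X:ℚ[X]) - 1)^r' * X^n
      = ∑ i ∈ Finset.range (r'+1), C ((-1)^(r'-i) * (r'.choose i : ℚ)) * X ^ (n+i) := by
    have h1 : (X:ℚ[X]) - 1 = X + C (-1) := by simp [sub_eq_add_neg]
    rw [h1, add_pow, Finset.sum_mul]
    refine Finset.sum_congr rfl fun i hi => ?_
    rw [← C_pow, C_mul, Polynomial.C_eq_natCast, pow_add]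
    ring
  have step1 : S (r'+1) n = ((r':ℚ)+1) * I2 0 1 ((X:ℚ[X])^r' * (X+1)^n) := by
    rw [hP, I2_sum, Finset.mul_sum, S]
    refine Finset.sum_congr rfl fun k hk => ?_
    rw [I2_monomial, one_pow, zero_pow (by omega)]
    push_cast
    ring
  rw [step1, I2_comp, hcomp, hQ, I2_sum, Finset.mul_sum]
  refine Finset.sum_congr rfl fun i hi => ?_
  rw [I2_monomial, one_pow]
  push_cast
  ring

theorem order_dvd_of_S_integral (r n : ℕ) (hr : 0 < r) (hn : 0 < n)
    (p : ℕ) (hp : p.Prime) (hpr : max r 2 < p)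
    (j₀ : ℕ) (hj₀ : 1 ≤ j₀ ∧ j₀ ≤ r) (hdvd : p ∣ n + j₀)
    (huniq : ∀ j, 1 ≤ j → j ≤ r → p ∣ n + j → j = j₀)
    (hint : ∃ m : ℤ, S r n = m) :
    orderOf (2 : ZMod p) ∣ n + j₀ := by
  obtain ⟨m0, hm0⟩ := hint
  obtain ⟨r', rfl⟩ : ∃ r', r = r' + 1 := ⟨r - 1, by omega⟩
  obtain ⟨hj1, hj2⟩ := hj₀
  set i₀ : ℕ := j₀ - 1 with hi₀def
  have hji : j₀ = i₀ + 1 := by omega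
  set s : Finset ℕ := Finset.range (r' + 1) with hsdef
  have hi₀s : i₀ ∈ s := Finset.mem_range.mpr (by omega)
  set d : ℕ → ℕ := fun i => n + i + 1 with hd
  set c : ℕ → ℤ := fun i => ((r' : ℤ) + 1) * (r'.choose i) * (-1)^(r' - i) with hc
  have hdpos : ∀ i, 0 < d i := fun i => Nat.succ_pos _
  -- rewrite the identity
  have hS : (m0 : ℚ) = ∑ i ∈ s, (c i : ℚ) * ((2:ℚ)^(d i) - 1) / ((d i : ℕ) : ℚ) := by
    rw [← hm0, S_eq]
    refine Finset.sum_congr rfl fun i hi => ?_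
    simp only [hc, hd]
    push_cast
    ring
  -- clear denominators
  have key : (m0 : ℚ) * ∏ i ∈ s, ((d i : ℕ) : ℚ)
      = ∑ i ∈ s, (c i : ℚ) * ((2:ℚ)^(d i) - 1) * ∏ i' ∈ s.erase i, ((d i' : ℕ) : ℚ) := by
    rw [hS, Finset.sum_mul]
    refine Finset.sum_congr rfl fun i hi => ?_
    rw [← Finset.mul_prod_erase _ (fun i => ((d i : ℕ) : ℚ)) hi]
    have hne : ((d i : ℕ) : ℚ) ≠ 0 := by
      exact_mod_cast (hdpos i).ne'
    field_simp
  have hZ : m0 * ∏ i ∈ s, (d i : ℤ)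
      = ∑ i ∈ s, c i * ((2:ℤ)^(d i) - 1) * ∏ i' ∈ s.erase i, (d i' : ℤ) := by
    have := key
    push_cast at this
    exact_mod_cast this
  have hpp : Prime (p : ℤ) := Nat.prime_iff_prime_int.mp hp
  have hdi₀ : d i₀ = n + j₀ := by simp [hd]; omega
  -- p divides the LHS
  have hL : (p : ℤ) ∣ m0 * ∏ i ∈ s, (d i : ℤ) := by
    refine Dvd.dvd.mul_left ?_ m0
    refine dvd_trans ?_ (Finset.dvd_prod_of_mem _ hi₀s)
    rw [hdi₀]
    exact_mod_cast Int.natCast_dvd_natCast.mpr hdvd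
  -- p divides all terms except i₀
  have hrest : (p : ℤ) ∣ ∑ i ∈ s.erase i₀, c i * ((2:ℤ)^(d i) - 1) * ∏ i' ∈ s.erase i, (d i' : ℤ) := by
    refine Finset.dvd_sum fun i hi => ?_
    refine Dvd.dvd.mul_left ?_ _
    have hi₀' : i₀ ∈ s.erase i :=
      Finset.mem_erase.mpr ⟨fun h => (Finset.mem_erase.mp hi).1 h.symm, hi₀s⟩
    refine dvd_trans ?_ (Finset.dvd_prod_of_mem _ hi₀')
    rw [hdi₀]
    exact_mod_cast Int.natCast_dvd_natCast.mpr hdvd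
  have hterm : (p : ℤ) ∣ c i₀ * ((2:ℤ)^(d i₀) - 1) * ∏ i' ∈ s.erase i₀, (d i' : ℤ) := by
    have hsum : (p:ℤ) ∣ ∑ i ∈ s, c i * ((2:ℤ)^(d i) - 1) * ∏ i' ∈ s.erase i, (d i' : ℤ) := by
      rw [← hZ]; exact hL
    rw [← Finset.add_sum_erase _ _ hi₀s] at hsum
    have h2 := dvd_sub hsum hrest
    simpa using h2
  have hnc : ¬ (p : ℤ) ∣ c i₀ := by
    intro h
    have h2 : p ∣ (c i₀).natAbs := Int.natCast_dvd.mp h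
    have h3 : (c i₀).natAbs = (r' + 1) * r'.choose i₀ := by
      simp [hc, Int.natAbs_mul, Int.natAbs_pow]
      omega
    rw [h3] at h2
    rcases (Nat.Prime.dvd_mul hp).mp h2 with h4 | h4
    · have := Nat.le_of_dvd (by omega) h4
      omega
    · have hdf : r'.choose i₀ ∣ r'.factorial := by
        have hle : i₀ ≤ r' := by omega
        exact ⟨i₀.factorial * (r' - i₀).factorial, by
          rw [← mul_assoc, Nat.choose_mul_factorial_mul_factorial hle]⟩
      have h5 : p ∣ r'.factorial := h4.trans hdf
      have h6 : p ≤ r' := (Nat.Prime.dvd_factorial hp).mp h5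
      omega
  have hnp : ¬ (p : ℤ) ∣ ∏ i' ∈ s.erase i₀, (d i' : ℤ) := by
    intro h
    rw [← Nat.cast_prod] at h
    have h2 : p ∣ ∏ i' ∈ s.erase i₀, d i' := Int.natCast_dvd_natCast.mp h
    obtain ⟨i, hi, hdvd'⟩ := hp.prime.exists_mem_finset_dvd h2
    have hine : i ≠ i₀ := (Finset.mem_erase.mp hi).1
    have hirange : i < r' + 1 := Finset.mem_range.mp (Finset.mem_erase.mp hi).2
    have hdvd'' : p ∣ n + (i + 1) := by
      have : d i = n + (i + 1) := by simp [hd]; omega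
      rwa [this] at hdvd'
    have := huniq (i + 1) (by omega) (by omega) hdvd''
    omega
  have h2m : (p : ℤ) ∣ (2 : ℤ) ^ (d i₀) - 1 := by
    rcases hpp.dvd_mul.mp hterm with h | h
    · rcases hpp.dvd_mul.mp h with h' | h'
      · exact absurd h' hnc
      · exact h'
    · exact absurd h hnp
  rw [hdi₀] at h2m
  have hz : (2 : ZMod p) ^ (n + j₀) = 1 := by
    have hcast := (ZMod.intCast_zmod_eq_zero_iff_dvd _ p).mpr h2m
    push_cast at hcast
    exact sub_eq_zero.mp hcast
  exact orderOf_dvd_of_pow_eq_one hz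
end

section
/- There exists r_0 such that for every integer r > r_0 the following holds: if p_1, p_2, p_3, p_4 are distinct primes with r < p_i \le r + r^{0.61}, \ell_2(p_i) > r^{0.3} for each i, and \gcd(p_i - 1, p_j - 1) < r^{0.001} for all i < j, then \operatorname{lcm}(p_1, p_2, p_3, p_4, \ell_2(p_1), \ell_2(p_2), \ell_2(p_3), \ell_2(p_4)) > r^{5.194}. -/
lemma gcd_lcm_dvd' (a b c : ℕ) (ha : a ≠ 0) (hb : b ≠ 0) (hc : c ≠ 0) :
    Nat.gcd (Nat.lcm a b) c ∣ Nat.gcd a c * Nat.gcd b c := by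
  have hl : Nat.lcm a b ≠ 0 := Nat.lcm_ne_zero ha hb
  have hg : Nat.gcd (Nat.lcm a b) c ≠ 0 := Nat.gcd_ne_zero_right hc
  have hm : Nat.gcd a c * Nat.gcd b c ≠ 0 :=
    Nat.mul_ne_zero (Nat.gcd_ne_zero_right hc) (Nat.gcd_ne_zero_right hc)
  rw [← Nat.factorization_le_iff_dvd hg hm, Finsupp.le_def]
  intro p
  rw [Nat.factorization_mul (Nat.gcd_ne_zero_right hc) (Nat.gcd_ne_zero_right hc),
      Nat.factorization_gcd hl hc, Nat.factorization_lcm ha hb,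
      Nat.factorization_gcd ha hc, Nat.factorization_gcd hb hc]
  simp only [Finsupp.inf_apply, Finsupp.sup_apply, Finsupp.add_apply]
  omega

lemma lcm4_bound' (a b c d : ℕ) (ha : a ≠ 0) (hb : b ≠ 0) (hc : c ≠ 0) (hd : d ≠ 0) :
    a * b * c * d ≤ Nat.lcm (Nat.lcm a b) (Nat.lcm c d) *
      (Nat.gcd a b * (Nat.gcd a c * Nat.gcd b c) * (Nat.gcd a d * Nat.gcd b d * Nat.gcd c d)) := by
  set X := Nat.lcm a b with hX
  set Y := Nat.lcm X c with hY
  have hXne : X ≠ 0 := Nat.lcm_ne_zero ha hb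
  have hYne : Y ≠ 0 := Nat.lcm_ne_zero hXne hc
  have e1 : a * b = Nat.gcd a b * X := (Nat.gcd_mul_lcm a b).symm
  have e2 : X * c = Nat.gcd X c * Y := (Nat.gcd_mul_lcm X c).symm
  have e3 : Y * d = Nat.gcd Y d * Nat.lcm Y d := (Nat.gcd_mul_lcm Y d).symm
  have hYd : Nat.lcm Y d = Nat.lcm (Nat.lcm a b) (Nat.lcm c d) := by
    rw [hY, hX, Nat.lcm_assoc]
  have h2 : Nat.gcd X c ≤ Nat.gcd a c * Nat.gcd b c :=
    Nat.le_of_dvd (Nat.pos_of_ne_zero (Nat.mul_ne_zero (Nat.gcd_ne_zero_right hc)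
      (Nat.gcd_ne_zero_right hc))) (gcd_lcm_dvd' a b c ha hb hc)
  have h3 : Nat.gcd Y d ≤ Nat.gcd a d * Nat.gcd b d * Nat.gcd c d := by
    have h5 := gcd_lcm_dvd' X c d hXne hc hd
    have h4 := gcd_lcm_dvd' a b d ha hb hd
    have h6 : Nat.gcd Y d ∣ Nat.gcd a d * Nat.gcd b d * Nat.gcd c d :=
      h5.trans (Nat.mul_dvd_mul_right h4 _)
    exact Nat.le_of_dvd (Nat.pos_of_ne_zero (by
      refine Nat.mul_ne_zero (Nat.mul_ne_zero ?_ ?_) ?_ <;> exact Nat.gcd_ne_zero_right hd)) h6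
  calc a * b * c * d = Nat.gcd a b * (X * c) * d := by rw [e1]; ring
    _ = Nat.gcd a b * Nat.gcd X c * (Y * d) := by rw [e2]; ring
    _ = Nat.gcd a b * Nat.gcd X c * Nat.gcd Y d * Nat.lcm Y d := by rw [e3]; ring
    _ ≤ Nat.gcd a b * (Nat.gcd a c * Nat.gcd b c) * (Nat.gcd a d * Nat.gcd b d * Nat.gcd c d)
        * Nat.lcm Y d :=
      Nat.mul_le_mul_right _ (Nat.mul_le_mul (Nat.mul_le_mul_left _ h2) h3)
    _ = Nat.lcm (Nat.lcm a b) (Nat.lcm c d) *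
        (Nat.gcd a b * (Nat.gcd a c * Nat.gcd b c) * (Nat.gcd a d * Nat.gcd b d * Nat.gcd c d)) := by
      rw [hYd]; ring

lemma order_dvd_sub_one' (p : ℕ) (hp : p.Prime) (h2 : 2 < p) :
    orderOf (2 : ZMod p) ∣ p - 1 := by
  haveI : Fact p.Prime := ⟨hp⟩
  have h20 : (2 : ZMod p) ≠ 0 := by
    have : ((2 : ℕ) : ZMod p) ≠ 0 := by
      rw [Ne, ZMod.natCast_eq_zero_iff]
      intro h
      exact absurd (Nat.le_of_dvd two_pos h) (by omega)
    simpa using this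
  exact ZMod.orderOf_dvd_card_sub_one h20

/-- A prime `q > r` does not divide `ℓ` when `ℓ ∣ p - 1` for a prime `p` with `r < p ≤ 2r`. -/
lemma prime_not_dvd' (r p q ℓ : ℕ) (hp : p.Prime) (hq : q.Prime) (hrp : r < p) (hrq : r < q)
    (hp2 : p ≤ 2 * r) (hr : 2 < r) (hℓ : ℓ ∣ p - 1) (hℓ0 : ℓ ≠ 0) : ¬ q ∣ ℓ := by
  intro hqd
  have hqp : q ∣ p - 1 := hqd.trans hℓ
  obtain ⟨k, hk⟩ := hqp
  have hk0 : k ≠ 0 := by rintro rfl; simp at hk; omega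
  have hk1 : k = 1 := by
    by_contra hne
    have h2k : 2 ≤ k := by omega
    have hh : q * 2 ≤ q * k := Nat.mul_le_mul_left q h2k
    omega
  -- p = q + 1
  rw [hk1, Nat.mul_one] at hk
  have hpq : p = q + 1 := by omega
  have hqodd : Odd q := hq.odd_of_ne_two (by omega)
  have hpeven : Even p := by rw [hpq]; exact Odd.add_one hqodd
  have := (Nat.Prime.even_iff hp).mp hpeven
  omega

theorem lcm_lower_bound :
    ∃ r₀ : ℕ, ∀ r : ℕ, r₀ < r →
      ∀ p₁ p₂ p₃ p₄ : ℕ,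
        p₁.Prime → p₂.Prime → p₃.Prime → p₄.Prime →
        p₁ ≠ p₂ → p₁ ≠ p₃ → p₁ ≠ p₄ → p₂ ≠ p₃ → p₂ ≠ p₄ → p₃ ≠ p₄ →
        (r < p₁ ∧ (p₁ : ℝ) ≤ (r : ℝ) + (r : ℝ) ^ (0.61 : ℝ)) →
        (r < p₂ ∧ (p₂ : ℝ) ≤ (r : ℝ) + (r : ℝ) ^ (0.61 : ℝ)) →
        (r < p₃ ∧ (p₃ : ℝ) ≤ (r : ℝ) + (r : ℝ) ^ (0.61 : ℝ)) →
        (r < p₄ ∧ (p₄ : ℝ) ≤ (r : ℝ) + (r : ℝ) ^ (0.61 : ℝ)) →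
        (r : ℝ) ^ (0.3 : ℝ) < (orderOf (2 : ZMod p₁) : ℝ) →
        (r : ℝ) ^ (0.3 : ℝ) < (orderOf (2 : ZMod p₂) : ℝ) →
        (r : ℝ) ^ (0.3 : ℝ) < (orderOf (2 : ZMod p₃) : ℝ) →
        (r : ℝ) ^ (0.3 : ℝ) < (orderOf (2 : ZMod p₄) : ℝ) →
        (Nat.gcd (p₁ - 1) (p₂ - 1) : ℝ) < (r : ℝ) ^ (0.001 : ℝ) →
        (Nat.gcd (p₁ - 1) (p₃ - 1) : ℝ) < (r : ℝ) ^ (0.001 : ℝ) →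
        (Nat.gcd (p₁ - 1) (p₄ - 1) : ℝ) < (r : ℝ) ^ (0.001 : ℝ) →
        (Nat.gcd (p₂ - 1) (p₃ - 1) : ℝ) < (r : ℝ) ^ (0.001 : ℝ) →
        (Nat.gcd (p₂ - 1) (p₄ - 1) : ℝ) < (r : ℝ) ^ (0.001 : ℝ) →
        (Nat.gcd (p₃ - 1) (p₄ - 1) : ℝ) < (r : ℝ) ^ (0.001 : ℝ) →
        (r : ℝ) ^ (5.194 : ℝ) <
          (Nat.lcm (Nat.lcm (Nat.lcm p₁ p₂) (Nat.lcm p₃ p₄))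
            (Nat.lcm (Nat.lcm (orderOf (2 : ZMod p₁)) (orderOf (2 : ZMod p₂)))
              (Nat.lcm (orderOf (2 : ZMod p₃)) (orderOf (2 : ZMod p₄)))) : ℝ) := by
  use 2
  intro r hr p₁ p₂ p₃ p₄ hp₁ hp₂ hp₃ hp₄ h12 h13 h14 h23 h24 h34
    hb₁ hb₂ hb₃ hb₄ ho₁ ho₂ ho₃ ho₄ hg12 hg13 hg14 hg23 hg24 hg34
  set x : ℝ := (r : ℝ) with hxdef
  have hx3 : (3 : ℝ) ≤ x := by rw [hxdef]; exact_mod_cast (by omega : 3 ≤ r)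
  have hx0 : (0 : ℝ) < x := by linarith
  have hx1 : (1 : ℝ) ≤ x := by linarith
  set ℓ₁ := orderOf (2 : ZMod p₁) with hl1
  set ℓ₂ := orderOf (2 : ZMod p₂) with hl2
  set ℓ₃ := orderOf (2 : ZMod p₃) with hl3
  set ℓ₄ := orderOf (2 : ZMod p₄) with hl4
  have hxr3 : (0 : ℝ) < x ^ (0.3 : ℝ) := Real.rpow_pos_of_pos hx0 _
  have hL10 : ℓ₁ ≠ 0 := by
    intro h; rw [h] at ho₁; simp at ho₁; linarith
  have hL20 : ℓ₂ ≠ 0 := by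
    intro h; rw [h] at ho₂; simp at ho₂; linarith
  have hL30 : ℓ₃ ≠ 0 := by
    intro h; rw [h] at ho₃; simp at ho₃; linarith
  have hL40 : ℓ₄ ≠ 0 := by
    intro h; rw [h] at ho₄; simp at ho₄; linarith
  -- each pᵢ ≤ 2r
  have hx61 : x ^ (0.61 : ℝ) ≤ x := by
    have := Real.rpow_le_rpow_of_exponent_le hx1 (by norm_num : (0.61 : ℝ) ≤ 1)
    rwa [Real.rpow_one] at this
  have h2r : ∀ p : ℕ, (p : ℝ) ≤ x + x ^ (0.61 : ℝ) → p ≤ 2 * r := by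
    intro p hp
    have h2x : (p : ℝ) ≤ 2 * x := by linarith
    rw [hxdef] at h2x
    exact_mod_cast h2x
  have hq₁ : p₁ ≤ 2 * r := h2r p₁ hb₁.2
  have hq₂ : p₂ ≤ 2 * r := h2r p₂ hb₂.2
  have hq₃ : p₃ ≤ 2 * r := h2r p₃ hb₃.2
  have hq₄ : p₄ ≤ 2 * r := h2r p₄ hb₄.2
  -- orders divide pᵢ - 1
  have hd₁ : ℓ₁ ∣ p₁ - 1 := order_dvd_sub_one' p₁ hp₁ (by omega)
  have hd₂ : ℓ₂ ∣ p₂ - 1 := order_dvd_sub_one' p₂ hp₂ (by omega)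
  have hd₃ : ℓ₃ ∣ p₃ - 1 := order_dvd_sub_one' p₃ hp₃ (by omega)
  have hd₄ : ℓ₄ ∣ p₄ - 1 := order_dvd_sub_one' p₄ hp₄ (by omega)
  -- no pⱼ divides any ℓᵢ, hence coprimality
  have hcop : ∀ q : ℕ, q.Prime → r < q →
      Nat.Coprime q (Nat.lcm (Nat.lcm ℓ₁ ℓ₂) (Nat.lcm ℓ₃ ℓ₄)) := by
    intro q hq hrq
    have c1 : Nat.Coprime q ℓ₁ := (Nat.Prime.coprime_iff_not_dvd hq).mpr
      (prime_not_dvd' r p₁ q ℓ₁ hp₁ hq hb₁.1 hrq hq₁ hr hd₁ hL10)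
    have c2 : Nat.Coprime q ℓ₂ := (Nat.Prime.coprime_iff_not_dvd hq).mpr
      (prime_not_dvd' r p₂ q ℓ₂ hp₂ hq hb₂.1 hrq hq₂ hr hd₂ hL20)
    have c3 : Nat.Coprime q ℓ₃ := (Nat.Prime.coprime_iff_not_dvd hq).mpr
      (prime_not_dvd' r p₃ q ℓ₃ hp₃ hq hb₃.1 hrq hq₃ hr hd₃ hL30)
    have c4 : Nat.Coprime q ℓ₄ := (Nat.Prime.coprime_iff_not_dvd hq).mpr
      (prime_not_dvd' r p₄ q ℓ₄ hp₄ hq hb₄.1 hrq hq₄ hr hd₄ hL40)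
    have lr : ∀ a b : ℕ, Nat.Coprime q a → Nat.Coprime q b → Nat.Coprime q (Nat.lcm a b) :=
      fun a b u v => Nat.Coprime.coprime_dvd_right
        (Nat.lcm_dvd (dvd_mul_right a b) (dvd_mul_left b a)) (Nat.Coprime.mul_right u v)
    exact lr _ _ (lr _ _ c1 c2) (lr _ _ c3 c4)
  set M := Nat.lcm (Nat.lcm ℓ₁ ℓ₂) (Nat.lcm ℓ₃ ℓ₄) with hM
  have hcP : Nat.Coprime (Nat.lcm (Nat.lcm p₁ p₂) (Nat.lcm p₃ p₄)) M := by
    have ll : ∀ a b : ℕ, Nat.Coprime a M → Nat.Coprime b M → Nat.Coprime (Nat.lcm a b) M :=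
      fun a b u v => Nat.Coprime.coprime_dvd_left
        (Nat.lcm_dvd (dvd_mul_right a b) (dvd_mul_left b a)) (Nat.Coprime.mul u v)
    exact ll _ _ (ll _ _ (hcop p₁ hp₁ hb₁.1) (hcop p₂ hp₂ hb₂.1))
      (ll _ _ (hcop p₃ hp₃ hb₃.1) (hcop p₄ hp₄ hb₄.1))
  -- lcm of the primes is their product
  have hPP : Nat.lcm (Nat.lcm p₁ p₂) (Nat.lcm p₃ p₄) = p₁ * p₂ * (p₃ * p₄) := by
    have c12 : Nat.Coprime p₁ p₂ := (Nat.coprime_primes hp₁ hp₂).mpr h12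
    have c34 : Nat.Coprime p₃ p₄ := (Nat.coprime_primes hp₃ hp₄).mpr h34
    have c : Nat.Coprime (p₁ * p₂) (p₃ * p₄) := by
      have c13 : Nat.Coprime p₁ p₃ := (Nat.coprime_primes hp₁ hp₃).mpr h13
      have c14 : Nat.Coprime p₁ p₄ := (Nat.coprime_primes hp₁ hp₄).mpr h14
      have c23 : Nat.Coprime p₂ p₃ := (Nat.coprime_primes hp₂ hp₃).mpr h23
      have c24 : Nat.Coprime p₂ p₄ := (Nat.coprime_primes hp₂ hp₄).mpr h24
      exact Nat.Coprime.mul (Nat.Coprime.mul_right c13 c14)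
        (Nat.Coprime.mul_right c23 c24)
    rw [c12.lcm_eq_mul, c34.lcm_eq_mul, c.lcm_eq_mul]
  have hLCM : Nat.lcm (Nat.lcm (Nat.lcm p₁ p₂) (Nat.lcm p₃ p₄)) M
      = p₁ * p₂ * (p₃ * p₄) * M := by
    rw [hcP.lcm_eq_mul, hPP]
  rw [hLCM]
  -- main nat inequality from lcm4_bound'
  set G := Nat.gcd ℓ₁ ℓ₂ * (Nat.gcd ℓ₁ ℓ₃ * Nat.gcd ℓ₂ ℓ₃) *
      (Nat.gcd ℓ₁ ℓ₄ * Nat.gcd ℓ₂ ℓ₄ * Nat.gcd ℓ₃ ℓ₄) with hG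
  have hmain : ℓ₁ * ℓ₂ * ℓ₃ * ℓ₄ ≤ M * G := lcm4_bound' ℓ₁ ℓ₂ ℓ₃ ℓ₄ hL10 hL20 hL30 hL40
  -- gcd bounds
  have hgb : ∀ a b pa pb : ℕ, a ∣ pa - 1 → b ∣ pb - 1 → r < pa →
      ((Nat.gcd (pa-1) (pb-1) : ℝ) < x ^ (0.001 : ℝ)) →
      ((Nat.gcd a b : ℝ) < x ^ (0.001 : ℝ)) := by
    intro a b pa pb hda hdb hrpa hgcd
    have hdd : Nat.gcd a b ∣ Nat.gcd (pa - 1) (pb - 1) :=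
      Nat.dvd_gcd ((Nat.gcd_dvd_left a b).trans hda) ((Nat.gcd_dvd_right a b).trans hdb)
    have hpos : 0 < Nat.gcd (pa - 1) (pb - 1) := by
      have h1 : 0 < pa - 1 := by omega
      exact Nat.gcd_pos_of_pos_left _ h1
    have := Nat.le_of_dvd hpos hdd
    have : (Nat.gcd a b : ℝ) ≤ (Nat.gcd (pa-1) (pb-1) : ℝ) := by exact_mod_cast this
    linarith
  have k12 : (Nat.gcd ℓ₁ ℓ₂ : ℝ) < x ^ (0.001 : ℝ) := hgb _ _ _ _ hd₁ hd₂ hb₁.1 hg12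
  have k13 : (Nat.gcd ℓ₁ ℓ₃ : ℝ) < x ^ (0.001 : ℝ) := hgb _ _ _ _ hd₁ hd₃ hb₁.1 hg13
  have k14 : (Nat.gcd ℓ₁ ℓ₄ : ℝ) < x ^ (0.001 : ℝ) := hgb _ _ _ _ hd₁ hd₄ hb₁.1 hg14
  have k23 : (Nat.gcd ℓ₂ ℓ₃ : ℝ) < x ^ (0.001 : ℝ) := hgb _ _ _ _ hd₂ hd₃ hb₂.1 hg23
  have k24 : (Nat.gcd ℓ₂ ℓ₄ : ℝ) < x ^ (0.001 : ℝ) := hgb _ _ _ _ hd₂ hd₄ hb₂.1 hg24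
  have k34 : (Nat.gcd ℓ₃ ℓ₄ : ℝ) < x ^ (0.001 : ℝ) := hgb _ _ _ _ hd₃ hd₄ hb₃.1 hg34
  set y : ℝ := x ^ (0.001 : ℝ) with hy
  have hy0 : (0 : ℝ) < y := Real.rpow_pos_of_pos hx0 _
  have gnn : ∀ a b : ℕ, (0:ℝ) ≤ (Nat.gcd a b : ℝ) := fun a b => Nat.cast_nonneg _
  have hGlt : (G : ℝ) < y * (y * y) * (y * y * y) := by
    push_cast [hG]
    have t1 : (Nat.gcd ℓ₁ ℓ₃ : ℝ) * (Nat.gcd ℓ₂ ℓ₃ : ℝ) < y * y :=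
      mul_lt_mul'' k13 k23 (gnn _ _) (gnn _ _)
    have t2 : (Nat.gcd ℓ₁ ℓ₄ : ℝ) * (Nat.gcd ℓ₂ ℓ₄ : ℝ) < y * y :=
      mul_lt_mul'' k14 k24 (gnn _ _) (gnn _ _)
    have t3 : (Nat.gcd ℓ₁ ℓ₄ : ℝ) * (Nat.gcd ℓ₂ ℓ₄ : ℝ) * (Nat.gcd ℓ₃ ℓ₄ : ℝ)
        < y * y * y := mul_lt_mul'' t2 k34 (by positivity) (gnn _ _)
    have t4 : (Nat.gcd ℓ₁ ℓ₂ : ℝ) * ((Nat.gcd ℓ₁ ℓ₃ : ℝ) * (Nat.gcd ℓ₂ ℓ₃ : ℝ))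
        < y * (y * y) := mul_lt_mul'' k12 t1 (gnn _ _) (by positivity)
    exact mul_lt_mul'' t4 t3 (by positivity) (by positivity)
  have hy6 : y * (y * y) * (y * y * y) = x ^ (0.006 : ℝ) := by
    rw [hy]
    simp only [← Real.rpow_add hx0]
    norm_num
  have hGlt' : (G : ℝ) < x ^ (0.006 : ℝ) := by rw [← hy6]; exact hGlt
  have hG0 : (0 : ℝ) < (G : ℝ) := by
    have : G ≠ 0 := by
      rw [hG]
      refine Nat.mul_ne_zero (Nat.mul_ne_zero ?_ (Nat.mul_ne_zero ?_ ?_))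
        (Nat.mul_ne_zero (Nat.mul_ne_zero ?_ ?_) ?_) <;>
      · apply Nat.gcd_ne_zero_left; assumption
    exact_mod_cast Nat.pos_of_ne_zero this
  -- real product bounds
  have hPprod : x ^ (4 : ℝ) < ((p₁ : ℝ) * p₂ * ((p₃ : ℝ) * p₄)) := by
    have e1 : (x : ℝ) < p₁ := by rw [hxdef]; exact_mod_cast hb₁.1
    have e2 : (x : ℝ) < p₂ := by rw [hxdef]; exact_mod_cast hb₂.1
    have e3 : (x : ℝ) < p₃ := by rw [hxdef]; exact_mod_cast hb₃.1
    have e4 : (x : ℝ) < p₄ := by rw [hxdef]; exact_mod_cast hb₄.1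
    have hx4 : x ^ (4 : ℝ) = x * x * (x * x) := by
      rw [show (4:ℝ) = ((4:ℕ):ℝ) by norm_num, Real.rpow_natCast]; ring
    rw [hx4]
    have u1 : x * x < (p₁ : ℝ) * p₂ := mul_lt_mul'' e1 e2 hx0.le hx0.le
    have u2 : x * x < (p₃ : ℝ) * p₄ := mul_lt_mul'' e3 e4 hx0.le hx0.le
    exact mul_lt_mul'' u1 u2 (by positivity) (by positivity)
  have hLprod : x ^ (1.2 : ℝ) < ((ℓ₁ : ℝ) * ℓ₂ * ℓ₃ * ℓ₄) := by
    have hx12 : x ^ (1.2 : ℝ) = x ^ (0.3:ℝ) * x ^ (0.3:ℝ) * x ^ (0.3:ℝ) * x ^ (0.3:ℝ) := by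
      rw [← Real.rpow_add hx0, ← Real.rpow_add hx0, ← Real.rpow_add hx0]
      norm_num
    rw [hx12]
    have u1 := mul_lt_mul'' ho₁ ho₂ hxr3.le hxr3.le
    have u2 := mul_lt_mul'' u1 ho₃ (by positivity) hxr3.le
    exact mul_lt_mul'' u2 ho₄ (by positivity) hxr3.le
  -- assemble
  have key : x ^ (5.194 : ℝ) * (G : ℝ) <
      ((p₁ * p₂ * (p₃ * p₄) * M : ℕ) : ℝ) * (G : ℝ) := by
    have s1 : x ^ (5.194 : ℝ) * (G : ℝ) < x ^ (5.194 : ℝ) * x ^ (0.006 : ℝ) :=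
      mul_lt_mul_of_pos_left hGlt' (Real.rpow_pos_of_pos hx0 _)
    have s2 : x ^ (5.194 : ℝ) * x ^ (0.006 : ℝ) = x ^ (4 : ℝ) * x ^ (1.2 : ℝ) := by
      rw [← Real.rpow_add hx0, ← Real.rpow_add hx0]; norm_num
    have s3 : x ^ (4 : ℝ) * x ^ (1.2 : ℝ) <
        ((p₁ : ℝ) * p₂ * ((p₃ : ℝ) * p₄)) * ((ℓ₁ : ℝ) * ℓ₂ * ℓ₃ * ℓ₄) :=
      mul_lt_mul'' hPprod hLprod (by positivity) (by positivity)
    have s4 : ((ℓ₁ : ℝ) * ℓ₂ * ℓ₃ * ℓ₄) ≤ (M : ℝ) * (G : ℝ) := by exact_mod_cast hmain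
    have s5 : ((p₁ : ℝ) * p₂ * ((p₃ : ℝ) * p₄)) * ((ℓ₁ : ℝ) * ℓ₂ * ℓ₃ * ℓ₄) ≤
        ((p₁ * p₂ * (p₃ * p₄) * M : ℕ) : ℝ) * (G : ℝ) := by
      push_cast
      have hPnn : (0:ℝ) ≤ (p₁ : ℝ) * p₂ * ((p₃ : ℝ) * p₄) := by positivity
      calc (p₁ : ℝ) * p₂ * ((p₃ : ℝ) * p₄) * ((ℓ₁ : ℝ) * ℓ₂ * ℓ₃ * ℓ₄)
          ≤ (p₁ : ℝ) * p₂ * ((p₃ : ℝ) * p₄) * ((M : ℝ) * (G : ℝ)) :=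
            mul_le_mul_of_nonneg_left s4 hPnn
        _ = (p₁ : ℝ) * p₂ * ((p₃ : ℝ) * p₄) * (M : ℝ) * (G : ℝ) := by ring
    calc x ^ (5.194 : ℝ) * (G : ℝ) < x ^ (4 : ℝ) * x ^ (1.2 : ℝ) := by rw [← s2]; exact s1
      _ < ((p₁ : ℝ) * p₂ * ((p₃ : ℝ) * p₄)) * ((ℓ₁ : ℝ) * ℓ₂ * ℓ₃ * ℓ₄) := s3
      _ ≤ _ := s5
  exact lt_of_mul_lt_mul_right key hG0.le
end
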